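/- Let X be a nonempty set, let (X, τ^A) be an Alexandroff topological space and let τ be a T₀ topology on X. If cl_τ({x}) = cl_{τ^A}({x}) for every x ∈ X, then τ ⊆ τ^A, i.e., τ^A is finer than τ. -/
import Mathlib


open Topology

def IsAlexandroff {X : Type*} (τ : TopologicalSpace X) : Prop :=
  ∀ S : Set (Set X), (∀ s ∈ S, IsOpen[τ] s) → IsOpen[τ] (⋂₀ S)

def IsQuasiMetric {X : Type*} (d : X → X → ℝ) : Prop :=
  (∀ x y, 0 ≤ d x y) ∧ (∀ x, d x x = 0) ∧
  (∀ x y z, d x y ≤ d x z + d z y) ∧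
  (∀ x y, d x y = 0 → d y x = 0 → x = y)

def ballTopology {X : Type*} (d : X → X → ℝ) : TopologicalSpace X :=
  TopologicalSpace.generateFrom {B | ∃ x r, 0 < r ∧ B = {y | d x y < r}}

def IsEquidistantQM {X : Type*} (d : X → X → ℝ) : Prop :=
  ∃ t > 0, ∀ x y, d x y ≠ 0 → d x y = t

def IsEquidistantMetric {X : Type*} (ρ : X → X → ℝ) : Prop :=
  (∀ x y, ρ x y = 0 ↔ x = y) ∧ (∀ x y, ρ x y = ρ y x) ∧
  (∀ x y z, ρ x z ≤ ρ x y + ρ y z) ∧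
  ∃ t > 0, ∀ x y, x ≠ y → ρ x y = t

lemma mem_cl_aux {X : Type*} (τ' : TopologicalSpace X) {t : Set X} {x : X} :
    x ∈ @closure X τ' t ↔ ∀ o, IsOpen[τ'] o → x ∈ o → (o ∩ t).Nonempty := by
  letI := τ'
  exact mem_closure_iff

theorem stmt12 {X : Type*} [Nonempty X] (τA τ : TopologicalSpace X)
    (hA : IsAlexandroff τA) (hT0 : @T0Space X τ)
    (h : ∀ x : X, @closure X τ {x} = @closure X τA {x}) :
    ∀ s : Set X, IsOpen[τ] s → IsOpen[τA] s := by
  intro s hs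
  have key : ∀ x ∈ s, ∀ y ∈ ⋂₀ {V | IsOpen[τA] V ∧ x ∈ V}, y ∈ s := by
    intro x hx y hy
    have hxc : x ∈ @closure X τA {y} := by
      rw [mem_cl_aux τA]
      intro o ho hxo
      exact ⟨y, hy o ⟨ho, hxo⟩, rfl⟩
    rw [← h y, mem_cl_aux τ] at hxc
    obtain ⟨z, hz, hz'⟩ := hxc s hs hx
    rwa [Set.mem_singleton_iff.mp hz'] at hz
  have hseq : s = ⋃ x ∈ s, ⋂₀ {V | IsOpen[τA] V ∧ x ∈ V} := by
    ext y
    constructor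
    · intro hy
      exact Set.mem_biUnion hy (fun V hV => hV.2)
    · intro hy
      obtain ⟨x, hx, hy'⟩ := Set.mem_iUnion₂.mp hy
      exact key x hx y hy'
  rw [hseq]
  letI := τA
  exact isOpen_biUnion fun x _ => hA _ fun V hV => hV.1
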